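/- Let D be a GCD domain with fraction field K and let A ∈ D^{n×n} with det A ≠ 0. Suppose R ∈ D^{n×n} is upper triangular with nonzero diagonal entries R_{ii} = p_i, set D_g = diag(p_1, p_1p_2, p_2p_3, …, p_{n−1}p_n), and suppose Θ ∈ D^{n×n} is such that AᵗA = Rᵗ · D_g^{−1} · R and A = Θ · D_g^{−1} · R hold over K. Then for every k with 1 ≤ k ≤ n, the k-th determinantal divisor d_k* of A divides every entry of the k-th row of R and every entry of the k-th column of Θ; moreover, for 2 ≤ k ≤ n, the product d_{k−1}* · d_k* divides the (k,k) entry p_{k−1}p_k of D_g. -/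

import Mathlib

open Matrix

/-- The diagonal matrix `D_g = diag(p₁, p₁p₂, p₂p₃, …, p_{n−1}p_n)` built from the
pivots `p : Fin n → D`. -/
def bareissDiag {D : Type*} [CommRing D] {n : ℕ} (p : Fin n → D) :
    Matrix (Fin n) (Fin n) D :=
  Matrix.diagonal fun i =>
    (if (i : ℕ) = 0 then 1
      else p ⟨(i : ℕ) - 1, lt_of_le_of_lt (Nat.sub_le _ _) i.isLt⟩) * p i

lemma sum_fin_restrict {β : Type*} [AddCommMonoid β] {n m : ℕ} (h : m + 1 ≤ n)
    (F : Fin n → β) (h0 : ∀ r : Fin n, m < (r : ℕ) → F r = 0) :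
    ∑ r, F r = ∑ c : Fin (m + 1), F (Fin.castLE h c) := by
  set f : ℕ → β := fun i => if hi : i < n then F ⟨i, hi⟩ else 0 with hf
  have h1 : ∑ r : Fin n, F r = ∑ i ∈ Finset.range n, f i := by
    rw [← Fin.sum_univ_eq_sum_range]
    exact Finset.sum_congr rfl fun r _ => by simp [hf, r.isLt]
  have h2 : ∑ c : Fin (m + 1), F (Fin.castLE h c) = ∑ i ∈ Finset.range (m + 1), f i := by
    rw [← Fin.sum_univ_eq_sum_range]
    refine Finset.sum_congr rfl fun c _ => ?_
    have hc : (c : ℕ) < n := lt_of_lt_of_le c.isLt h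
    simp only [hf, hc, dif_pos]
    rfl
  rw [h1, h2]
  symm
  apply Finset.sum_subset (Finset.range_subset_range.mpr h)
  intro i hi hni
  simp only [Finset.mem_range] at hi hni
  simp only [hf, dif_pos hi]
  exact h0 ⟨i, hi⟩ (not_lt.mp hni)

lemma dvd_det_mul' {D : Type*} [CommRing D] {m N : ℕ}
    (B : Matrix (Fin m) (Fin N) D) (A : Matrix (Fin N) (Fin m) D) (c : D)
    (h : ∀ f : Fin m → Fin N, c ∣ (A.submatrix f id).det) :
    c ∣ (B * A).det := by
  have h1 : (B * A).det
      = Matrix.detRowAlternating (fun a => ∑ r : Fin N, B a r • (A r)) := by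
    congr 1
    ext a b
    simp [Matrix.mul_apply]
  rw [h1]
  have h3 := (Matrix.detRowAlternating (R := D) (n := Fin m)).toMultilinearMap.map_sum
    (g := fun a r => B a r • A r)
  simp only [AlternatingMap.coe_multilinearMap] at h3
  rw [h3]
  apply Finset.dvd_sum
  intro f _
  have h2 : (Matrix.detRowAlternating (R := D) (n := Fin m))
      (fun i => B i (f i) • A (f i)) = (∏ a, B a (f a)) • (A.submatrix f id).det := by
    have h4 := MultilinearMap.map_smul_univ
      (Matrix.detRowAlternating (R := D) (n := Fin m)).toMultilinearMap
      (fun a => B a (f a)) (fun a => A (f a))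
    simp only [AlternatingMap.coe_multilinearMap] at h4
    exact h4
  rw [h2, smul_eq_mul]
  exact (h f).mul_left _

lemma dvd_det_submatrix' {D : Type*} [CommRing D] {m n : ℕ}
    (A : Matrix (Fin n) (Fin n) D) (c : D) (J : Fin m → Fin n)
    (h : ∀ I : Fin m → Fin n, StrictMono I → c ∣ (A.submatrix I J).det)
    (f : Fin m → Fin n) : c ∣ (A.submatrix f J).det := by
  by_cases hf : Function.Injective f
  · set σ := Tuple.sort f with hσ
    have hmono : Monotone (f ∘ σ) := Tuple.monotone_sort f
    have hsm : StrictMono (f ∘ σ) := hmono.strictMono_of_injective (hf.comp σ.injective)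
    have he : A.submatrix f J = (A.submatrix (f ∘ σ) J).submatrix σ.symm id := by
      ext a b
      simp [Matrix.submatrix_apply]
    rw [he, Matrix.det_permute]
    exact ((h _ hsm).mul_left _)
  · obtain ⟨a, b, hab, hne⟩ := Function.not_injective_iff.mp hf
    have : (A.submatrix f J).det = 0 := by
      refine Matrix.det_zero_of_row_eq hne ?_
      ext b'
      simp [hab]
    rw [this]
    exact dvd_zero c
theorem stmt15 {D K : Type*} [CommRing D] [IsDomain D] [GCDMonoid D] [Field K]
    [Algebra D K] [IsFractionRing D K] {n : ℕ} (A R Θ : Matrix (Fin n) (Fin n) D)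
    (hdet : A.det ≠ 0)
    (hRtri : ∀ i j : Fin n, (j : ℕ) < (i : ℕ) → R i j = 0)
    (hp : ∀ i : Fin n, R i i ≠ 0)
    (hGram : (Aᵀ * A).map (algebraMap D K) =
      (Rᵀ).map (algebraMap D K) *
        ((bareissDiag fun i : Fin n => R i i).map (algebraMap D K))⁻¹ *
        R.map (algebraMap D K))
    (hQR : A.map (algebraMap D K) =
      Θ.map (algebraMap D K) *
        ((bareissDiag fun i : Fin n => R i i).map (algebraMap D K))⁻¹ *
        R.map (algebraMap D K))
    (d : Fin n → D)
    (hd1 : ∀ (k : Fin n) (I J : Fin ((k : ℕ) + 1) → Fin n), StrictMono I →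
      StrictMono J → d k ∣ (A.submatrix I J).det)
    (hd2 : ∀ (k : Fin n) (c : D), (∀ I J : Fin ((k : ℕ) + 1) → Fin n, StrictMono I →
      StrictMono J → c ∣ (A.submatrix I J).det) → c ∣ d k) :
    (∀ k j : Fin n, d k ∣ R k j) ∧
    (∀ k i : Fin n, d k ∣ Θ i k) ∧
    (∀ k : Fin n, 0 < (k : ℕ) →
      d ⟨(k : ℕ) - 1, lt_of_le_of_lt (Nat.sub_le _ _) k.isLt⟩ * d k ∣
        R ⟨(k : ℕ) - 1, lt_of_le_of_lt (Nat.sub_le _ _) k.isLt⟩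
            ⟨(k : ℕ) - 1, lt_of_le_of_lt (Nat.sub_le _ _) k.isLt⟩ * R k k) := by
  classical
  have hφ : Function.Injective (algebraMap D K) := IsFractionRing.injective D K
  set φ := algebraMap D K with hφdef
  set p : Fin n → D := fun i : Fin n => R i i with hpdef
  set q : Fin n → D := fun i =>
    (if (i : ℕ) = 0 then 1
      else p ⟨(i : ℕ) - 1, lt_of_le_of_lt (Nat.sub_le _ _) i.isLt⟩) * p i with hqdef
  have hq0 : ∀ i, q i ≠ 0 := by
    intro i
    apply mul_ne_zero _ (hp i)
    split
    · exact one_ne_zero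
    · exact hp _
  set Ak := A.map φ with hAk
  set Rk := R.map φ with hRk
  set Θk := Θ.map φ with hΘk
  set Dk := Matrix.diagonal (φ ∘ q) with hDk
  have hmapD : (bareissDiag p).map φ = Dk := by
    rw [show bareissDiag p = Matrix.diagonal q from rfl]
    exact Matrix.diagonal_map (map_zero φ)
  have hpK : ∀ i, φ (p i) ≠ 0 := fun i h => hp i (hφ (by simpa using h))
  have hqK : ∀ i, φ (q i) ≠ 0 := fun i h => hq0 i (hφ (by simpa using h))
  have hRkt : Rk.BlockTriangular id := by
    intro i j hij
    simp only [hRk, Matrix.map_apply]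
    rw [hRtri i j hij, map_zero]
  have hRkdet : IsUnit Rk.det := by
    rw [Matrix.det_of_upperTriangular hRkt]
    exact isUnit_iff_ne_zero.mpr (Finset.prod_ne_zero_iff.mpr fun i _ => hpK i)
  have hDkdet : IsUnit Dk.det := by
    rw [hDk, Matrix.det_diagonal]
    exact isUnit_iff_ne_zero.mpr (Finset.prod_ne_zero_iff.mpr fun i _ => hqK i)
  have hDinv : Dk⁻¹ = Matrix.diagonal (fun i => (φ (q i))⁻¹) := by
    apply Matrix.inv_eq_right_inv
    ext a b
    rw [hDk, Matrix.diagonal_mul_diagonal]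
    rcases eq_or_ne a b with rfl | hab
    · rw [Matrix.diagonal_apply_eq, Matrix.one_apply_eq]
      exact mul_inv_cancel₀ (hqK a)
    · rw [Matrix.diagonal_apply_ne _ hab, Matrix.one_apply_ne hab]
  have hG : Akᵀ * Ak = Rkᵀ * Dk⁻¹ * Rk := by
    have h := hGram
    rw [hmapD, Matrix.map_mul, Matrix.transpose_map, Matrix.transpose_map] at h
    exact h
  have hΘ2 : Θk = Ak * Rk⁻¹ * Dk := by
    have h := hQR
    rw [hmapD] at h
    rw [h, Matrix.mul_nonsing_inv_cancel_right _ _ hRkdet,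
      Matrix.nonsing_inv_mul_cancel_right _ _ hDkdet]
  have hAΘ : Akᵀ * Θk = Rkᵀ := by
    rw [hΘ2, ← Matrix.mul_assoc, ← Matrix.mul_assoc, hG,
      Matrix.mul_nonsing_inv_cancel_right _ _ hRkdet,
      Matrix.nonsing_inv_mul_cancel_right _ _ hDkdet]
  have hRTA : ∀ k j : Fin n, R k j = ∑ i, Θ i k * A i j := by
    intro k j
    apply hφ
    have h1 : Θkᵀ * Ak = Rk := by
      have h2 := congrArg Matrix.transpose hAΘ
      rwa [Matrix.transpose_mul, Matrix.transpose_transpose, Matrix.transpose_transpose] at h2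
    have h2 : (Θkᵀ * Ak) k j = Rk k j := by rw [h1]
    rw [Matrix.mul_apply] at h2
    simp only [Matrix.transpose_apply, hΘk, hAk, hRk, Matrix.map_apply] at h2
    rw [map_sum]
    simp only [_root_.map_mul]
    exact h2.symm
  have key : ∀ k i : Fin n, d k ∣ Θ i k := by
    intro k i
    set m := (k : ℕ) with hm
    have hmn : m + 1 ≤ n := k.isLt
    set emb : Fin (m + 1) → Fin n := Fin.castLE hmn with hemb
    have hembval : ∀ b : Fin (m + 1), ((emb b : Fin n) : ℕ) = (b : ℕ) := fun b => rfl
    have hembk : emb (Fin.last m) = k := by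
      apply Fin.ext
      simp [hemb]
      exact hm
    set G : Matrix (Fin n) (Fin n) D := Aᵀ * A with hGD
    have hGk : Akᵀ * Ak = G.map φ := by
      rw [hGD, Matrix.map_mul, Matrix.transpose_map]
    set Mv : (Fin (m + 1) → D) → Matrix (Fin (m + 1)) (Fin (m + 1)) D :=
      fun v => Matrix.of fun a b => if (a : ℕ) < m then G (emb a) (emb b) else v b with hMv
    set C : Fin (m + 1) → D := fun b =>
      (-1 : D) ^ (m + (b : ℕ)) *
        ((Mv 0).submatrix (Fin.last m).succAbove b.succAbove).det with hC
    have L1 : ∀ v, (Mv v).det = ∑ b, v b * C b := by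
      intro v
      rw [Matrix.det_succ_row (Mv v) (Fin.last m)]
      refine Finset.sum_congr rfl fun b _ => ?_
      have h1 : Mv v (Fin.last m) b = v b := by simp [hMv]
      have h2 : (Mv v).submatrix (Fin.last m).succAbove b.succAbove
          = (Mv 0).submatrix (Fin.last m).succAbove b.succAbove := by
        ext a' b'
        simp [hMv, Fin.succAbove_last, Matrix.submatrix_apply, a'.isLt]
      rw [h1, h2, hC]
      have hlast : ((Fin.last m : Fin (m + 1)) : ℕ) = m := rfl
      rw [hlast]
      ring
    have L2 : ∀ j : Fin n, (j : ℕ) < m → ∑ b, G j (emb b) * C b = 0 := by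
      intro j hj
      rw [← L1 (fun b => G j (emb b))]
      refine Matrix.det_zero_of_row_eq
        (i := (⟨(j : ℕ), lt_trans hj (Nat.lt_succ_self m)⟩ : Fin (m + 1)))
        (j := Fin.last m) ?_ ?_
      · intro hcon
        have := congrArg Fin.val hcon
        simp at this
        omega
      · funext b
        have hej : emb ⟨(j : ℕ), lt_trans hj (Nat.lt_succ_self m)⟩ = j := Fin.ext rfl
        simp [hMv, hj, hej]
    have L3 : ∑ b, G k (emb b) * C b = (G.submatrix emb emb).det := by
      rw [← L1 (fun b => G k (emb b))]
      congr 1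
      ext a b
      by_cases ha : (a : ℕ) < m
      · simp [hMv, ha]
      · have haa : a = Fin.last m := Fin.ext (by have := a.isLt; simp [Fin.last]; omega)
        subst haa
        simp [hMv, hembk]
    set Ghat := (G.map φ).submatrix emb emb with hGhat
    have hGhat2 : Ghat = ((Rkᵀ * Dk⁻¹).submatrix emb emb) * (Rk.submatrix emb emb) := by
      have e1 : G.map φ = Rkᵀ * Dk⁻¹ * Rk := by rw [← hGk, hG]
      rw [hGhat, e1]
      ext a b
      rw [Matrix.submatrix_apply, Matrix.mul_apply, Matrix.mul_apply]
      have hvan : ∀ r : Fin n, m < (r : ℕ) →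
          (Rkᵀ * Dk⁻¹) (emb a) r * Rk r (emb b) = 0 := by
        intro r hr
        have h1 : (Rkᵀ * Dk⁻¹) (emb a) r = Rk r (emb a) * (φ (q r))⁻¹ := by
          rw [hDinv, Matrix.mul_diagonal, Matrix.transpose_apply]
        have h2 : R r (emb a) = 0 := by
          apply hRtri
          have := a.isLt
          rw [hembval a]
          omega
        rw [h1]
        simp only [hRk, Matrix.map_apply, h2, map_zero, zero_mul]
      rw [sum_fin_restrict hmn (fun r => (Rkᵀ * Dk⁻¹) (emb a) r * Rk r (emb b))
        (fun r hr => by show (Rkᵀ * Dk⁻¹) (emb a) r * Rk r (emb b) = 0; exact hvan r hr)]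
      rfl
    have hdetL : ((Rkᵀ * Dk⁻¹).submatrix emb emb).det
        = ∏ a : Fin (m + 1), (φ (p (emb a)) * (φ (q (emb a)))⁻¹) := by
      rw [Matrix.det_of_lowerTriangular _ ?_]
      · refine Finset.prod_congr rfl fun a _ => ?_
        rw [Matrix.submatrix_apply, hDinv, Matrix.mul_diagonal, Matrix.transpose_apply]
        simp [hRk, hpdef]
      · intro a b hab
        have hab' : a < b := hab
        rw [Matrix.submatrix_apply, hDinv, Matrix.mul_diagonal, Matrix.transpose_apply]
        have h2 : R (emb b) (emb a) = 0 := by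
          apply hRtri
          rw [hembval a, hembval b]
          exact hab'
        simp only [hRk, Matrix.map_apply, h2, map_zero, zero_mul]
    have hdetU : (Rk.submatrix emb emb).det = ∏ a : Fin (m + 1), φ (p (emb a)) := by
      rw [Matrix.det_of_upperTriangular ?_]
      · refine Finset.prod_congr rfl fun a _ => ?_
        simp [hRk, hpdef]
      · intro a b hab
        have hab' : b < a := hab
        rw [Matrix.submatrix_apply]
        have h2 : R (emb a) (emb b) = 0 := by
          apply hRtri
          rw [hembval a, hembval b]
          exact hab'
        simp only [hRk, Matrix.map_apply, h2, map_zero]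
    set g : ℕ → D := fun i0 => if h : i0 < n then p ⟨i0, h⟩ else 1 with hg
    have hgp : ∏ a : Fin (m + 1), p (emb a) = ∏ i0 ∈ Finset.range (m + 1), g i0 := by
      rw [← Fin.prod_univ_eq_prod_range]
      refine Finset.prod_congr rfl fun a _ => ?_
      have ha : (a : ℕ) < n := lt_of_lt_of_le a.isLt hmn
      simp only [hg, ha, dif_pos]
      rfl
    have hq_split : ∏ a : Fin (m + 1), q (emb a)
        = (∏ i0 ∈ Finset.range m, g i0) * ∏ i0 ∈ Finset.range (m + 1), g i0 := by
      have e : ∀ a : Fin (m + 1),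
          q (emb a) = (if (a : ℕ) = 0 then 1 else g ((a : ℕ) - 1)) * g (a : ℕ) := by
        intro a
        have ha : (a : ℕ) < n := lt_of_lt_of_le a.isLt hmn
        have ha1 : (a : ℕ) - 1 < n := by omega
        simp only [hqdef, hg, hembval a, ha, ha1, dif_pos]
        rfl
      rw [Finset.prod_congr rfl fun a _ => e a, Finset.prod_mul_distrib]
      congr 1
      · rw [Fin.prod_univ_eq_prod_range (fun i0 => if i0 = 0 then 1 else g (i0 - 1)) (m + 1),
          Finset.prod_range_succ' (fun i0 => if i0 = 0 then 1 else g (i0 - 1)) m]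
        simp
      · exact Fin.prod_univ_eq_prod_range (fun i0 => g i0) (m + 1)
    have hgm : g m = p k := by
      have hmn' : m < n := k.isLt
      simp only [hg]
      rw [dif_pos hmn']
    have hprodD : (∏ a : Fin (m + 1), q (emb a)) * p k
        = (∏ a : Fin (m + 1), p (emb a)) * ∏ a : Fin (m + 1), p (emb a) := by
      rw [hq_split, hgp, Finset.prod_range_succ, hgm]
      ring
    have hΔ : Ghat.det = φ (p k) := by
      rw [hGhat2, Matrix.det_mul, hdetL, hdetU, Finset.prod_mul_distrib,
        Finset.prod_inv_distrib]
      set P := ∏ a : Fin (m + 1), φ (p (emb a)) with hP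
      set Q := ∏ a : Fin (m + 1), φ (q (emb a)) with hQ
      have hQ0 : Q ≠ 0 := Finset.prod_ne_zero_iff.mpr fun a _ => hqK _
      have h2 : Q * φ (p k) = P * P := by
        have h3 := congrArg φ hprodD
        simp only [_root_.map_mul, map_prod] at h3
        exact h3
      calc P * Q⁻¹ * P = Q * φ (p k) * Q⁻¹ := by rw [h2]; ring
        _ = φ (p k) * (Q * Q⁻¹) := by ring
        _ = φ (p k) := by rw [mul_inv_cancel₀ hQ0, mul_one]
    set y : Fin n → K := fun j => (Rk⁻¹ * Dk) j k with hy
    haveI : Invertible Rk := Rk.invertibleOfIsUnitDet hRkdet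
    have hRkinvt : Rk⁻¹.BlockTriangular id :=
      Matrix.blockTriangular_inv_of_blockTriangular hRkt
    have hy0 : ∀ j : Fin n, m < (j : ℕ) → y j = 0 := by
      intro j hj
      simp only [hy, hDk, Matrix.mul_diagonal]
      rw [hRkinvt (show (id k : Fin n) < id j from hj), zero_mul]
    have hΘcol : ∀ i' : Fin n, Θk i' k = ∑ j, Ak i' j * y j := by
      intro i'
      rw [hΘ2, Matrix.mul_assoc, Matrix.mul_apply]
    have hGy : ∀ j : Fin n, ∑ l, (G.map φ) j l * y l = φ (R k j) := by
      intro j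
      have e : G.map φ * (Rk⁻¹ * Dk) = Rkᵀ := by
        rw [← hGk, hG, ← Matrix.mul_assoc, Matrix.mul_nonsing_inv_cancel_right _ _ hRkdet,
          Matrix.nonsing_inv_mul_cancel_right _ _ hDkdet]
      have h2 : (G.map φ * (Rk⁻¹ * Dk)) j k = Rkᵀ j k := by rw [e]
      rw [Matrix.mul_apply] at h2
      simpa [Matrix.transpose_apply, hRk, Matrix.map_apply, hy] using h2
    set C' : Fin n → D := fun j => if h : (j : ℕ) < m + 1 then C ⟨(j : ℕ), h⟩ else 0 with hC'
    have hC'0 : ∀ j : Fin n, m < (j : ℕ) → C' j = 0 := by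
      intro j hj
      rw [hC']
      simp only
      rw [dif_neg (by omega)]
    have hC'emb : ∀ b : Fin (m + 1), C' (emb b) = C b := by
      intro b
      rw [hC']
      simp only
      rw [dif_pos (by rw [hembval b]; exact b.isLt)]
      exact congrArg C (Fin.ext (hembval b))
    have hsupp : ∀ f : Fin n → D, ∑ j, f j * C' j = ∑ b, f (emb b) * C b := by
      intro f
      rw [sum_fin_restrict hmn (fun j => f j * C' j)
        (fun r hr => by show f r * C' r = 0; rw [hC'0 r hr, mul_zero])]
      exact Finset.sum_congr rfl fun b _ => by rw [hC'emb]
    set z : Fin n → K := fun j => y j - φ (C' j) with hz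
    have hz0 : ∀ j : Fin n, m < (j : ℕ) → z j = 0 := by
      intro j hj
      simp only [hz]
      rw [hy0 j hj, hC'0 j hj, map_zero, sub_zero]
    have hGz : ∀ j : Fin n, (j : ℕ) < m + 1 → ∑ l, (G.map φ) j l * z l = 0 := by
      intro j hj
      have hsplit : ∑ l, (G.map φ) j l * z l
          = (∑ l, (G.map φ) j l * y l) - ∑ l, (G.map φ) j l * φ (C' l) := by
        rw [← Finset.sum_sub_distrib]
        refine Finset.sum_congr rfl fun l _ => ?_
        simp only [hz]
        ring
      have h2 : ∑ l, (G.map φ) j l * φ (C' l) = φ (∑ b, G j (emb b) * C b) := by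
        rw [← hsupp (fun l => G j l), map_sum]
        refine Finset.sum_congr rfl fun l _ => ?_
        rw [_root_.map_mul, Matrix.map_apply]
      rw [hsplit, hGy, h2]
      rcases Nat.lt_or_ge (j : ℕ) m with hlt | hge
      · rw [L2 j hlt, hRtri k j hlt]
        simp
      · have hjk : j = k := Fin.ext (by omega)
        subst hjk
        rw [L3]
        have h3 : φ (G.submatrix emb emb).det = Ghat.det := by
          rw [RingHom.map_det, hGhat, Matrix.submatrix_map]
          rfl
        rw [h3, hΔ]
        simp [hpdef]
    have hzero : ∀ b : Fin (m + 1), z (emb b) = 0 := by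
      have hU : IsUnit Ghat.det := isUnit_iff_ne_zero.mpr (by rw [hΔ]; exact hpK k)
      have hmv : Ghat *ᵥ (fun b => z (emb b)) = 0 := by
        funext j'
        show ∑ b, Ghat j' b * z (emb b) = 0
        have h4 : ∑ b, (G.map φ) (emb j') (emb b) * z (emb b)
            = ∑ l, (G.map φ) (emb j') l * z l :=
          (sum_fin_restrict hmn (fun l => (G.map φ) (emb j') l * z l)
            (fun r hr => by show (G.map φ) (emb j') r * z r = 0
                            rw [hz0 r hr, mul_zero])).symm
        have h5 : ∀ b, Ghat j' b = (G.map φ) (emb j') (emb b) := fun b => rfl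
        calc ∑ b, Ghat j' b * z (emb b)
            = ∑ b, (G.map φ) (emb j') (emb b) * z (emb b) :=
              Finset.sum_congr rfl fun b _ => by rw [h5]
          _ = ∑ l, (G.map φ) (emb j') l * z l := h4
          _ = 0 := hGz (emb j') (by rw [hembval j']; exact j'.isLt)
      have h6 : (fun b => z (emb b)) = 0 := by
        have h7 : Ghat⁻¹ *ᵥ (Ghat *ᵥ fun b => z (emb b)) = fun b => z (emb b) := by
          rw [Matrix.mulVec_mulVec, Matrix.nonsing_inv_mul _ hU, Matrix.one_mulVec]
        rw [hmv, Matrix.mulVec_zero] at h7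
        exact h7.symm
      exact fun b => congrFun h6 b
    have hyC : ∀ j : Fin n, y j = φ (C' j) := by
      intro j
      rcases Nat.lt_or_ge (j : ℕ) (m + 1) with hlt | hge
      · have h8 : z (emb ⟨(j : ℕ), hlt⟩) = 0 := hzero _
        have hej : emb ⟨(j : ℕ), hlt⟩ = j := Fin.ext rfl
        rw [hej] at h8
        have h9 : y j - φ (C' j) = 0 := h8
        exact sub_eq_zero.mp h9
      · rw [hy0 j (by omega), hC'0 j (by omega), map_zero]
    have hfinal : Θ i k = (Mv fun b => A i (emb b)).det := by
      apply hφ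
      calc φ (Θ i k) = Θk i k := by simp [hΘk]
        _ = ∑ j, Ak i j * y j := hΘcol i
        _ = ∑ j, φ (A i j) * φ (C' j) := by
            refine Finset.sum_congr rfl fun j0 _ => ?_
            simp only [hyC j0, hAk, Matrix.map_apply]
        _ = φ (∑ j, A i j * C' j) := by rw [map_sum]; simp only [_root_.map_mul]
        _ = φ (∑ b, A i (emb b) * C b) := by rw [hsupp (fun j0 => A i j0)]
        _ = φ ((Mv fun b => A i (emb b)).det) := by rw [L1]
    rw [hfinal]
    set N : Matrix (Fin n) (Fin (m + 1)) D :=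
      Matrix.of fun r a => if (a : ℕ) < m then A r (emb a) else (if r = i then 1 else 0) with hN
    have hMN : (Mv fun b => A i (emb b)) = Nᵀ * A.submatrix id emb := by
      ext a b
      rw [Matrix.mul_apply]
      by_cases ha : (a : ℕ) < m
      · simp only [hMv, hN, Matrix.of_apply, ha, if_true, Matrix.transpose_apply,
          Matrix.submatrix_apply, id_eq, hGD, Matrix.mul_apply, Matrix.transpose_apply]
      · simp only [hMv, hN, Matrix.of_apply, ha, if_false, Matrix.transpose_apply,
          Matrix.submatrix_apply, id_eq, ite_mul, one_mul, zero_mul]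
        rw [Finset.sum_ite_eq' Finset.univ i (fun r => A r (emb b))]
        simp
    rw [hMN]
    apply dvd_det_mul'
    intro f
    rw [Matrix.submatrix_submatrix]
    simp only [Function.comp_id, Function.id_comp]
    exact dvd_det_submatrix' A (d k) emb
      (fun I hI => hd1 k I emb hI (Fin.strictMono_castLE hmn)) f
  have part1 : ∀ k j : Fin n, d k ∣ R k j := by
    intro k j
    rw [hRTA k j]
    exact Finset.dvd_sum fun i _ => (key k i).mul_right _
  exact ⟨part1, key, fun k hk => mul_dvd_mul (part1 _ _) (part1 k k)⟩
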